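/- Let η ∈ M_n(ℂ) be a diagonal matrix with diagonal entries in {+1, −1}, and let M ∈ M_n(ℂ) be Hermitian and positive definite, so that H = η M is pseudohermitian with respect to η. Then H is diagonalizable by a pseudounitary matrix: there exist an invertible S ∈ M_n(ℂ) with S† η S = η and a real diagonal matrix D such that S⁻¹ H S = D. -/

import Mathlib

open Matrix ComplexOrder

section Aux

variable {n : ℕ}

/-- Elements of the span of a set of standard basis vectors vanish outside the index set. -/
lemma aux_span_single_support {s : Finset (Fin n)} {x : Fin n → ℂ}
    (hx : x ∈ Submodule.span ℂ ((fun i => Pi.single i (1:ℂ)) '' ↑s)) :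
    ∀ i ∉ s, x i = 0 := by
  induction hx using Submodule.span_induction with
  | mem y hy =>
    rcases hy with ⟨j, hj, rfl⟩
    intro i hi
    have : i ≠ j := by rintro rfl; exact hi hj
    simp [Pi.single_apply, this]
  | zero => simp
  | add y z hy hz ihy ihz => intro i hi; simp [ihy i hi, ihz i hi]
  | smul a y hy ihy => intro i hi; simp [ihy i hi]

lemma aux_finrank_span_single (s : Finset (Fin n)) :
    Module.finrank ℂ (Submodule.span ℂ ((fun i => Pi.single i (1:ℂ)) '' (↑s : Set (Fin n)))) = s.card := by
  have hb : LinearIndependent ℂ (fun i : Fin n => (Pi.single i (1:ℂ) : Fin n → ℂ)) := by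
    have := (Pi.basisFun ℂ (Fin n)).linearIndependent
    convert this using 1
    ext i
    simp [Pi.basisFun_apply]
  have hli : LinearIndependent ℂ
      (fun i : ((↑s : Set (Fin n))) => (Pi.single (i : Fin n) (1:ℂ) : Fin n → ℂ)) :=
    hb.comp _ Subtype.coe_injective
  have hr : Set.range (fun i : ((↑s : Set (Fin n))) =>
      (Pi.single (i : Fin n) (1:ℂ) : Fin n → ℂ)) = (fun i => Pi.single i (1:ℂ)) '' ↑s := by
    exact (Set.image_eq_range (fun i => Pi.single i (1:ℂ)) (↑s : Set (Fin n))).symm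
  rw [← hr, finrank_span_eq_card hli]
  simp

/-- The real quadratic form attached to a real diagonal matrix. -/
noncomputable def auxQ (τ : Fin n → ℝ) (x : Fin n → ℂ) : ℝ :=
  ∑ i, τ i * Complex.normSq (x i)

lemma aux_dot_eq_q (τ : Fin n → ℝ) (x : Fin n → ℂ) :
    star x ⬝ᵥ (Matrix.diagonal (fun i => (τ i : ℂ))) *ᵥ x = (auxQ τ x : ℂ) := by
  simp only [dotProduct, mulVec_diagonal, auxQ, Pi.star_apply]
  push_cast
  refine Finset.sum_congr rfl fun i _ => ?_
  rw [Complex.normSq_eq_conj_mul_self]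
  simp only [Complex.star_def]
  ring

/-- One inequality of Sylvester's law of inertia for sign matrices. -/
lemma aux_sylvester_le (σ τ : Fin n → ℝ) (hσ : ∀ i, σ i = 1 ∨ σ i = -1)
    (hτ : ∀ i, τ i = 1 ∨ τ i = -1) (R : Matrix (Fin n) (Fin n) ℂ) (hR : IsUnit R.det)
    (h : Rᴴ * Matrix.diagonal (fun i => (τ i : ℂ)) * R = Matrix.diagonal (fun i => (σ i : ℂ))) :
    (Finset.univ.filter fun i => σ i = 1).card ≤ (Finset.univ.filter fun i => τ i = 1).card := by
  classical
  set s : Finset (Fin n) := Finset.univ.filter (fun i => σ i = 1) with hs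
  set t : Finset (Fin n) := Finset.univ.filter (fun i => τ i = 1) with ht
  set tc : Finset (Fin n) := Finset.univ.filter (fun i => ¬ τ i = 1) with htc
  set Vσ : Submodule ℂ (Fin n → ℂ) :=
    Submodule.span ℂ ((fun i => Pi.single i (1:ℂ)) '' ↑s) with hVσ
  set Vτ : Submodule ℂ (Fin n → ℂ) :=
    Submodule.span ℂ ((fun i => Pi.single i (1:ℂ)) '' ↑tc) with hVτ
  set W : Submodule ℂ (Fin n → ℂ) := Vσ.map R.mulVecLin with hW
  -- injectivity of multiplication by R
  have hinj : Function.Injective R.mulVecLin := by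
    have : Function.Injective R.mulVec :=
      Matrix.mulVec_injective_iff_isUnit.mpr ((Matrix.isUnit_iff_isUnit_det R).mpr hR)
    exact this
  -- positivity on W
  have hWpos : ∀ x ∈ W, x ≠ 0 → 0 < auxQ τ x := by
    rintro x ⟨y, hy, rfl⟩ hx0
    have hy0 : y ≠ 0 := by rintro rfl; simp at hx0
    have key : (auxQ τ (R.mulVecLin y) : ℂ) = (auxQ σ y : ℂ) := by
      rw [← aux_dot_eq_q, ← aux_dot_eq_q, ← h]
      simp only [mulVecLin_apply, star_mulVec]
      simp [star_mulVec, dotProduct_mulVec, vecMul_vecMul, Matrix.mul_assoc]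
    have keyR : auxQ τ (R.mulVecLin y) = auxQ σ y := by exact_mod_cast key
    rw [keyR]
    have hterm : ∀ i, σ i * Complex.normSq (y i) = Complex.normSq (y i) := by
      intro i
      by_cases hyi : y i = 0
      · simp [hyi]
      · have his : i ∈ s := by
          by_contra his
          exact hyi (aux_span_single_support hy i his)
        have : σ i = 1 := by simpa [hs] using his
        simp [this]
    rw [auxQ]
    simp only [hterm]
    obtain ⟨j, hj⟩ : ∃ j, y j ≠ 0 := by
      by_contra hcon
      push_neg at hcon
      exact hy0 (funext hcon)
    exact Finset.sum_pos' (fun i _ => Complex.normSq_nonneg _)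
      ⟨j, Finset.mem_univ j, Complex.normSq_pos.mpr hj⟩
  -- nonpositivity on Vτ
  have hVneg : ∀ x ∈ Vτ, auxQ τ x ≤ 0 := by
    intro x hx
    apply Finset.sum_nonpos
    intro i _
    by_cases hti : τ i = 1
    · have : i ∉ tc := by simp [htc, hti]
      have hxi : x i = 0 := aux_span_single_support hx i this
      simp [hxi]
    · have : τ i = -1 := (hτ i).resolve_left hti
      rw [this]
      nlinarith [Complex.normSq_nonneg (x i)]
  -- disjointness
  have hdisj : W ⊓ Vτ = ⊥ := by
    rw [Submodule.eq_bot_iff]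
    intro x hx
    by_contra hx0
    exact absurd (hWpos x hx.1 hx0) (not_lt.mpr (hVneg x hx.2))
  -- finrank computations
  have hfW : Module.finrank ℂ W = s.card := by
    rw [hW, ← (Submodule.equivMapOfInjective _ hinj Vσ).finrank_eq, hVσ,
      aux_finrank_span_single]
  have hfV : Module.finrank ℂ Vτ = tc.card := aux_finrank_span_single tc
  have hsum := Submodule.finrank_sup_add_finrank_inf_eq W Vτ
  rw [hdisj] at hsum
  have hle : Module.finrank ℂ ↥(W ⊔ Vτ) ≤ n := by
    have := Submodule.finrank_le (W ⊔ Vτ)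
    simpa using this
  have hcard : t.card + tc.card = n := by
    rw [ht, htc]
    have := Finset.card_filter_add_card_filter_not
      (s := (Finset.univ : Finset (Fin n))) (p := fun i => τ i = 1)
    simpa using this
  rw [finrank_bot, add_zero, hfW] at hsum
  rw [hfV] at hsum
  omega

/-- Permutation matrix attached to `π`. -/
def permMat (π : Equiv.Perm (Fin n)) : Matrix (Fin n) (Fin n) ℂ :=
  Matrix.of fun i j => if i = π j then 1 else 0

lemma permMat_comm (π : Equiv.Perm (Fin n)) (v : Fin n → ℂ) :
    Matrix.diagonal v * permMat π = permMat π * Matrix.diagonal (fun j => v (π j)) := by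
  ext i j
  rw [Matrix.diagonal_mul, Matrix.mul_diagonal]
  by_cases h : i = π j
  · simp [permMat, h]
  · simp [permMat, h]

lemma permMat_unitary (π : Equiv.Perm (Fin n)) : (permMat π)ᴴ * permMat π = 1 := by
  ext i j
  simp only [Matrix.mul_apply, Matrix.conjTranspose_apply, permMat, Matrix.of_apply,
    apply_ite (star : ℂ → ℂ), star_one, star_zero, ite_mul, one_mul, zero_mul]
  rw [Finset.sum_ite_eq' Finset.univ (π i) (fun k => if k = π j then (1:ℂ) else 0)]
  simp [Matrix.one_apply, EmbeddingLike.apply_eq_iff_eq, eq_comm]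

end Aux

/-- **Lemma (diagonalization of a pseudohermitian by a pseudounitary).** Let `η` be a
diagonal signature matrix with entries `±1` and let `M` be Hermitian positive definite,
so that `H = η M` is pseudohermitian with respect to `η`. Then `H` is diagonalizable by
a pseudounitary: there are an invertible `S` with `Sᴴ η S = η` and a real diagonal `D`
with `S⁻¹ H S = D`. -/
theorem stmt_10 {n : ℕ} (η : Fin n → ℝ) (hη : ∀ i, η i = 1 ∨ η i = -1)
    (M : Matrix (Fin n) (Fin n) ℂ) (hM : M.PosDef) :
    ∃ (S : Matrix (Fin n) (Fin n) ℂ) (d : Fin n → ℝ),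
      IsUnit S.det ∧
      Sᴴ * Matrix.diagonal (fun i => (η i : ℂ)) * S =
        Matrix.diagonal (fun i => (η i : ℂ)) ∧
      S⁻¹ * (Matrix.diagonal (fun i => (η i : ℂ)) * M) * S =
        Matrix.diagonal (fun i => (d i : ℂ)) := by
  classical
  set E := Matrix.diagonal (fun i => (η i : ℂ)) with hE
  have hEne : ∀ i, (η i : ℂ) ≠ 0 := by
    intro i; rcases hη i with h | h <;> simp [h]
  have hEE : E * E = 1 := by
    rw [hE, Matrix.diagonal_mul_diagonal, ← Matrix.diagonal_one,
      Matrix.diagonal_eq_diagonal_iff]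
    intro i; rcases hη i with h | h <;> norm_num [h]
  have hEH : Eᴴ = E := by
    rw [hE, Matrix.diagonal_conjTranspose, Matrix.diagonal_eq_diagonal_iff]
    intro i; simp [Complex.conj_ofReal]
  obtain ⟨A, hAH, hAA⟩ : ∃ A : Matrix (Fin n) (Fin n) ℂ, A.IsHermitian ∧ A * A = M := by
    open scoped MatrixOrder in
    exact ⟨CFC.sqrt M, (CFC.sqrt_nonneg M).posSemidef.1,
      CFC.sqrt_mul_sqrt_self M hM.posSemidef.nonneg⟩
  have hAdet : IsUnit A.det := by
    rw [isUnit_iff_ne_zero]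
    intro h0
    have : M.det = 0 := by rw [← hAA, Matrix.det_mul, h0, mul_zero]
    exact hM.det_pos.ne' this
  haveI : Invertible A := A.invertibleOfIsUnitDet hAdet
  have hAinv : (A⁻¹)ᴴ = A⁻¹ := hAH.inv
  set G := A * E * A with hG
  have hGH : G.IsHermitian := by
    show Gᴴ = G
    rw [hG, Matrix.conjTranspose_mul, Matrix.conjTranspose_mul, hAH.eq, hEH, Matrix.mul_assoc]
  set U := (hGH.eigenvectorUnitary : Matrix (Fin n) (Fin n) ℂ) with hU
  set μ := hGH.eigenvalues with hμdef
  have hUU : star U * U = 1 := hGH.eigenvectorUnitary.2.1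
  have hUU' : U * star U = 1 := hGH.eigenvectorUnitary.2.2
  have spec : star U * G * U = Matrix.diagonal (fun i => (μ i : ℂ)) :=
    by have := hGH.conjStarAlgAut_star_eigenvectorUnitary
       rw [Unitary.conjStarAlgAut_star_apply] at this
       exact this
  have hdetG : G.det ≠ 0 := by
    rw [hG, Matrix.det_mul, Matrix.det_mul]
    refine mul_ne_zero (mul_ne_zero (isUnit_iff_ne_zero.mp hAdet) ?_)
      (isUnit_iff_ne_zero.mp hAdet)
    rw [hE, Matrix.det_diagonal]
    exact Finset.prod_ne_zero_iff.mpr fun i _ => hEne i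
  have hμ : ∀ i, μ i ≠ 0 := by
    intro i hi
    apply hdetG
    rw [hGH.det_eq_prod_eigenvalues]
    exact Finset.prod_eq_zero (Finset.mem_univ i) (by rw [← hμdef, hi]; simp)
  set σ : Fin n → ℝ := fun i => if 0 < μ i then 1 else -1 with hσdef
  have hσ : ∀ i, σ i = 1 ∨ σ i = -1 := by
    intro i; rw [hσdef]; by_cases h : 0 < μ i <;> simp [h]
  set r : Fin n → ℂ := fun i => ((Real.sqrt |μ i| : ℝ) : ℂ) with hrdef
  have hr0 : ∀ i, r i ≠ 0 := by
    intro i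
    rw [hrdef]
    simp only [ne_eq, Complex.ofReal_eq_zero]
    exact (Real.sqrt_pos.mpr (abs_pos.mpr (hμ i))).ne'
  have hrr : ∀ i, r i * (μ i : ℂ)⁻¹ * r i = (σ i : ℂ) := by
    intro i
    have h1 : r i * r i = ((|μ i| : ℝ) : ℂ) := by
      rw [hrdef, ← Complex.ofReal_mul, Real.mul_self_sqrt (abs_nonneg _)]
    have hμne : (μ i : ℂ) ≠ 0 := Complex.ofReal_ne_zero.mpr (hμ i)
    calc r i * (μ i : ℂ)⁻¹ * r i = (μ i : ℂ)⁻¹ * (r i * r i) := by ring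
      _ = (μ i : ℂ)⁻¹ * ((|μ i| : ℝ) : ℂ) := by rw [h1]
      _ = (σ i : ℂ) := by
          by_cases hpos : 0 < μ i
          · rw [abs_of_pos hpos, hσdef]
            simp [hpos, inv_mul_cancel₀ hμne]
          · have hneg : μ i < 0 := lt_of_le_of_ne (not_lt.mp hpos) (hμ i)
            rw [abs_of_neg hneg, hσdef]
            simp only [hpos, if_false]
            push_cast
            field_simp
    done
  set R := A⁻¹ * U * Matrix.diagonal r with hR
  -- G * U = U * diag μ
  have hGU : G * U = U * Matrix.diagonal (fun i => (μ i : ℂ)) := by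
    have h2 : U * (star U * G * U) = U * Matrix.diagonal (fun i => (μ i : ℂ)) := by rw [spec]
    rw [← Matrix.mul_assoc, ← Matrix.mul_assoc, hUU', Matrix.one_mul] at h2
    exact h2
  -- A⁻¹ * E * A⁻¹ = G⁻¹
  have hGinv : A⁻¹ * E * A⁻¹ = G⁻¹ := by
    have hright : G * (A⁻¹ * E * A⁻¹) = 1 := by
      rw [hG]
      simp only [Matrix.mul_assoc]
      rw [Matrix.mul_inv_cancel_left_of_invertible]
      rw [← Matrix.mul_assoc E E, hEE, Matrix.one_mul, Matrix.mul_inv_of_invertible]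
    exact (Matrix.inv_eq_right_inv hright).symm
  have hDinv : (Matrix.diagonal (fun i => (μ i : ℂ)))⁻¹
      = Matrix.diagonal (fun i => (μ i : ℂ)⁻¹) := by
    apply Matrix.inv_eq_right_inv
    rw [Matrix.diagonal_mul_diagonal, ← Matrix.diagonal_one,
      Matrix.diagonal_eq_diagonal_iff]
    intro i
    exact mul_inv_cancel₀ (Complex.ofReal_ne_zero.mpr (hμ i))
  have hUinv : U⁻¹ = star U := Matrix.inv_eq_left_inv hUU
  have hsUinv : (star U)⁻¹ = U := Matrix.inv_eq_left_inv hUU'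
  have hX : star U * (A⁻¹ * E * A⁻¹) * U = Matrix.diagonal (fun i => (μ i : ℂ)⁻¹) := by
    rw [← hDinv, ← spec, Matrix.mul_inv_rev (star U * G) U, Matrix.mul_inv_rev (star U) G,
      hUinv, hsUinv, hGinv, Matrix.mul_assoc]
  have hrstar : (Matrix.diagonal r)ᴴ = Matrix.diagonal r := by
    rw [Matrix.diagonal_conjTranspose, Matrix.diagonal_eq_diagonal_iff]
    intro i; rw [hrdef]; simp [Complex.conj_ofReal]
  -- claim 1 : Rᴴ * E * R = diagonal σ
  have claim1 : Rᴴ * E * R = Matrix.diagonal (fun i => (σ i : ℂ)) := by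
    have key := congrArg (fun X => Matrix.diagonal r * X * Matrix.diagonal r) hX
    simp only [Matrix.star_eq_conjTranspose, ← Matrix.mul_assoc] at key
    rw [hR]
    simp only [Matrix.conjTranspose_mul, hrstar, hAinv, ← Matrix.mul_assoc]
    rw [key, Matrix.diagonal_mul_diagonal, Matrix.diagonal_mul_diagonal,
      Matrix.diagonal_eq_diagonal_iff]
    intro i
    rw [← hrr i]
  -- claim 2 : (E * M) * R = R * diagonal μ
  have claim2 : E * M * R = R * Matrix.diagonal (fun i => (μ i : ℂ)) := by
    have hMA : M * A⁻¹ = A := by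
      rw [← hAA, Matrix.mul_inv_cancel_right_of_invertible]
    have lhs : E * M * R = E * A * U * Matrix.diagonal r := by
      rw [hR]
      simp only [← Matrix.mul_assoc]
      rw [Matrix.mul_assoc E M A⁻¹, hMA]
    have hcommd : Matrix.diagonal r * Matrix.diagonal (fun i => (μ i : ℂ))
        = Matrix.diagonal (fun i => (μ i : ℂ)) * Matrix.diagonal r := by
      rw [Matrix.diagonal_mul_diagonal, Matrix.diagonal_mul_diagonal,
        Matrix.diagonal_eq_diagonal_iff]
      intro i; ring
    have rhs : R * Matrix.diagonal (fun i => (μ i : ℂ)) = E * A * U * Matrix.diagonal r := by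
      rw [hR, Matrix.mul_assoc (A⁻¹ * U), hcommd, ← Matrix.mul_assoc (A⁻¹ * U),
        Matrix.mul_assoc A⁻¹ U, ← hGU, hG]
      simp only [← Matrix.mul_assoc]
      rw [Matrix.nonsing_inv_mul A hAdet, Matrix.one_mul]
    rw [lhs, rhs]
  -- R is invertible
  have hUdet : IsUnit U.det := by
    apply IsUnit.of_mul_eq_one (a := U.det) (star U).det
    rw [← Matrix.det_mul, hUU', Matrix.det_one]
  have hrdet : IsUnit (Matrix.diagonal r).det := by
    rw [Matrix.det_diagonal, isUnit_iff_ne_zero]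
    exact Finset.prod_ne_zero_iff.mpr fun i _ => hr0 i
  have hRdet : IsUnit R.det := by
    rw [hR, Matrix.det_mul, Matrix.det_mul]
    exact ((A.isUnit_nonsing_inv_det hAdet).mul hUdet).mul hrdet
  haveI : Invertible R := R.invertibleOfIsUnitDet hRdet
  -- Sylvester: the sign counts agree
  have hcard : (Finset.univ.filter fun i => σ i = 1).card
      = (Finset.univ.filter fun i => η i = 1).card := by
    refine le_antisymm (aux_sylvester_le σ η hσ hη R hRdet claim1) ?_
    have claim1' : (R⁻¹)ᴴ * Matrix.diagonal (fun i => (σ i : ℂ)) * R⁻¹ = E := by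
      calc (R⁻¹)ᴴ * Matrix.diagonal (fun i => (σ i : ℂ)) * R⁻¹
          = (R⁻¹)ᴴ * (Rᴴ * E * R) * R⁻¹ := by rw [claim1]
        _ = (R * R⁻¹)ᴴ * E * (R * R⁻¹) := by
            simp only [Matrix.conjTranspose_mul, Matrix.mul_assoc]
        _ = E := by
            rw [Matrix.mul_inv_of_invertible, Matrix.conjTranspose_one, Matrix.one_mul,
              Matrix.mul_one]
    exact aux_sylvester_le η σ hη hσ R⁻¹ (R.isUnit_nonsing_inv_det hRdet) claim1'
  -- the permutation matching σ to η
  have hcardsub : Fintype.card {i // η i = 1} = Fintype.card {i // σ i = 1} := by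
    rw [Fintype.card_subtype, Fintype.card_subtype, hcard]
  let e1 : {i // η i = 1} ≃ {i // σ i = 1} := Fintype.equivOfCardEq hcardsub
  let e2 : {i // ¬ η i = 1} ≃ {i // ¬ σ i = 1} := Fintype.equivOfCardEq (by
    rw [Fintype.card_subtype_compl, Fintype.card_subtype_compl, hcardsub])
  set π : Equiv.Perm (Fin n) := (Equiv.sumCompl fun i => η i = 1).symm.trans
    ((e1.sumCongr e2).trans (Equiv.sumCompl fun i => σ i = 1)) with hπdef
  have hπ : ∀ j, σ (π j) = η j := by
    intro j
    by_cases hj : η j = 1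
    · have : π j = ((e1 ⟨j, hj⟩ : {i // σ i = 1}) : Fin n) := by
        rw [hπdef]
        simp only [Equiv.trans_apply, Equiv.sumCongr_apply]
        rw [Equiv.sumCompl_symm_apply_of_pos (p := fun i => η i = 1) hj, Sum.map_inl, Equiv.sumCompl_apply_inl]
      rw [this, (e1 ⟨j, hj⟩).2, hj]
    · have : π j = ((e2 ⟨j, hj⟩ : {i // ¬ σ i = 1}) : Fin n) := by
        rw [hπdef]
        simp only [Equiv.trans_apply, Equiv.sumCongr_apply]
        rw [Equiv.sumCompl_symm_apply_of_neg (p := fun i => η i = 1) hj, Sum.map_inr, Equiv.sumCompl_apply_inr]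
      rw [this]
      rcases hσ ((e2 ⟨j, hj⟩ : {i // ¬ σ i = 1}) : Fin n) with h | h
      · exact absurd h (e2 ⟨j, hj⟩).2
      · rw [h, (hη j).resolve_left hj]
  have hPu : (permMat π)ᴴ * permMat π = 1 := permMat_unitary π
  have hPu' : permMat π * (permMat π)ᴴ = 1 := mul_eq_one_comm.mp hPu
  have hPdet : IsUnit (permMat π).det := by
    apply IsUnit.of_mul_eq_one (a := (permMat π).det) (permMat π)ᴴ.det
    rw [← Matrix.det_mul, hPu', Matrix.det_one]
  refine ⟨R * permMat π, fun j => μ (π j), ?_, ?_, ?_⟩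
  · rw [Matrix.det_mul]; exact hRdet.mul hPdet
  · rw [Matrix.conjTranspose_mul]
    rw [show (permMat π)ᴴ * Rᴴ * E * (R * permMat π)
        = (permMat π)ᴴ * (Rᴴ * E * R) * permMat π by simp only [Matrix.mul_assoc]]
    rw [claim1, Matrix.mul_assoc, permMat_comm π, ← Matrix.mul_assoc, hPu, Matrix.one_mul,
      Matrix.diagonal_eq_diagonal_iff]
    intro j; rw [hπ j]
  · haveI : Invertible (R * permMat π) :=
      (R * permMat π).invertibleOfIsUnitDet (by rw [Matrix.det_mul]; exact hRdet.mul hPdet)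
    rw [Matrix.mul_assoc (R * permMat π)⁻¹]
    rw [show E * M * (R * permMat π) = R * permMat π * Matrix.diagonal (fun j => (μ (π j) : ℂ)) by
      rw [← Matrix.mul_assoc, claim2, Matrix.mul_assoc, permMat_comm π, ← Matrix.mul_assoc]]
    rw [← Matrix.mul_assoc, Matrix.inv_mul_of_invertible, Matrix.one_mul]
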